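/- Let L₁ and L₂ be nonempty, locally finite, modular lattices and equip L = L₁ × L₂ with the componentwise order (so L is a locally finite modular lattice). Let w be a projective-constant weighting on L and r an integer such that (w, r) satisfies the differential condition on L. Then there exist weightings w₁ on L₁ and w₂ on L₂ and integers r₁ and r₂ such that: (1) (w₁, r₁) satisfies the differential condition on L₁; (2) (w₂, r₂) satisfies the differential condition on L₂; (3) r = r₁ + r₂; (4) for every covering pair x ⋖ y in L₁ and every z ∈ L₂, w((x, z), (y, z)) = w₁(x, y); and (5) for every v ∈ L₁ and every covering pair x ⋖ y in L₂, w((v, x), (v, y)) = w₂(x, y). -/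
import Mathlib

open scoped BigOperators

private lemma const_of_covBy' {α : Type*} [Lattice α] [LocallyFiniteOrder α]
    (f : α → ℤ) (h : ∀ a b : α, a ⋖ b → f a = f b) (a b : α) : f a = f b := by
  have step : ∀ c d : α, c ≤ d → f c = f d := by
    intro c d hcd
    have h' := le_iff_reflTransGen_covBy.mp hcd
    clear hcd
    induction h' with
    | refl => rfl
    | tail _ hcov ih => exact ih.trans (h _ _ hcov)
  exact (step (a ⊓ b) a inf_le_left).symm.trans (step (a ⊓ b) b inf_le_right)

/-- A weighting `w` on a lattice is projective-constant if it takes equal values on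
cover-projective coverings. -/
def ProjConst {L : Type*} [Lattice L] (w : L → L → ℤ) : Prop :=
  ∀ x y : L, x ≠ y → x ⊓ y ⋖ x → x ⊓ y ⋖ y → x ⋖ x ⊔ y → y ⋖ x ⊔ y →
    w (x ⊓ y) x = w y (x ⊔ y) ∧ w (x ⊓ y) y = w x (x ⊔ y)

/-- The pair `(w, r)` satisfies the differential condition on `L`. -/
def DiffCond {L : Type*} [Lattice L] (w : L → L → ℤ) (r : ℤ) : Prop :=
  ∀ x : L, {y | y ⋖ x}.Finite ∧ {z | x ⋖ z}.Finite ∧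
    ((∑ᶠ y ∈ {y | y ⋖ x}, w y x) + r = ∑ᶠ z ∈ {z | x ⋖ z}, w x z)

theorem stmt2 {L₁ L₂ : Type*} [Lattice L₁] [Lattice L₂]
    [Nonempty L₁] [Nonempty L₂]
    [LocallyFiniteOrder L₁] [LocallyFiniteOrder L₂]
    [IsModularLattice L₁] [IsModularLattice L₂]
    (w : L₁ × L₂ → L₁ × L₂ → ℤ) (hproj : ProjConst w) (r : ℤ)
    (hdiff : DiffCond w r) :
    ∃ (w₁ : L₁ → L₁ → ℤ) (w₂ : L₂ → L₂ → ℤ) (r₁ r₂ : ℤ),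
      DiffCond w₁ r₁ ∧
      DiffCond w₂ r₂ ∧
      r = r₁ + r₂ ∧
      (∀ x y : L₁, x ⋖ y → ∀ z : L₂, w (x, z) (y, z) = w₁ x y) ∧
      (∀ v : L₁, ∀ x y : L₂, x ⋖ y → w (v, x) (v, y) = w₂ x y) := by
  classical
  obtain ⟨x₀⟩ := ‹Nonempty L₁›
  obtain ⟨z₀⟩ := ‹Nonempty L₂›
  -- the key projectivity consequence
  have key : ∀ (x y : L₁), x ⋖ y → ∀ (z v : L₂), z ⋖ v →
      w (x, z) (x, v) = w (y, z) (y, v) ∧ w (x, z) (y, z) = w (x, v) (y, v) := by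
    intro x y hxy z v hzv
    have hx : x ≤ y := hxy.le
    have hz : z ≤ v := hzv.le
    have hne : (x, v) ≠ (y, z) := fun h => hxy.lt.ne (congrArg Prod.fst h)
    have hinf : (x, v) ⊓ (y, z) = (x, z) := by
      rw [Prod.mk_inf_mk, inf_eq_left.mpr hx, inf_eq_right.mpr hz]
    have hsup : (x, v) ⊔ (y, z) = (y, v) := by
      rw [Prod.mk_sup_mk, sup_eq_right.mpr hx, sup_eq_left.mpr hz]
    have c1 : (x, v) ⊓ (y, z) ⋖ (x, v) := by
      rw [hinf]; exact Prod.mk_covBy_mk_iff_right.mpr hzv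
    have c2 : (x, v) ⊓ (y, z) ⋖ (y, z) := by
      rw [hinf]; exact Prod.mk_covBy_mk_iff_left.mpr hxy
    have c3 : (x, v) ⋖ (x, v) ⊔ (y, z) := by
      rw [hsup]; exact Prod.mk_covBy_mk_iff_left.mpr hxy
    have c4 : (y, z) ⋖ (x, v) ⊔ (y, z) := by
      rw [hsup]; exact Prod.mk_covBy_mk_iff_right.mpr hzv
    have e := hproj (x, v) (y, z) hne c1 c2 c3 c4
    rw [hinf, hsup] at e
    exact e
  -- invariance of the weights
  have inv1 : ∀ x y : L₁, x ⋖ y → ∀ z z' : L₂, w (x, z) (y, z) = w (x, z') (y, z') := by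
    intro x y hxy z z'
    exact const_of_covBy' (fun u => w (x, u) (y, u))
      (fun a b hab => (key x y hxy a b hab).2) z z'
  have inv2 : ∀ z v : L₂, z ⋖ v → ∀ x x' : L₁, w (x, z) (x, v) = w (x', z) (x', v) := by
    intro z v hzv x x'
    exact const_of_covBy' (fun u => w (u, z) (u, v))
      (fun a b hab => (key a b hab z v hzv).1) x x'
  set w₁ : L₁ → L₁ → ℤ := fun a b => w (a, z₀) (b, z₀) with hw₁
  set w₂ : L₂ → L₂ → ℤ := fun a b => w (x₀, a) (x₀, b) with hw₂
  -- finiteness of cover sets in the factors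
  have finB1 : ∀ x : L₁, {y | y ⋖ x}.Finite := by
    intro x
    have him : ((fun y => ((y, z₀) : L₁ × L₂)) '' {y | y ⋖ x}).Finite := by
      refine (hdiff (x, z₀)).1.subset ?_
      rintro p ⟨y, hy, rfl⟩
      exact Prod.mk_covBy_mk_iff_left.mpr hy
    exact Set.Finite.of_finite_image him (fun a _ b _ h => congrArg Prod.fst h)
  have finA1 : ∀ x : L₁, {y | x ⋖ y}.Finite := by
    intro x
    have him : ((fun y => ((y, z₀) : L₁ × L₂)) '' {y | x ⋖ y}).Finite := by
      refine (hdiff (x, z₀)).2.1.subset ?_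
      rintro p ⟨y, hy, rfl⟩
      exact Prod.mk_covBy_mk_iff_left.mpr hy
    exact Set.Finite.of_finite_image him (fun a _ b _ h => congrArg Prod.fst h)
  have finB2 : ∀ z : L₂, {u | u ⋖ z}.Finite := by
    intro z
    have him : ((fun u => ((x₀, u) : L₁ × L₂)) '' {u | u ⋖ z}).Finite := by
      refine (hdiff (x₀, z)).1.subset ?_
      rintro p ⟨u, hu, rfl⟩
      exact Prod.mk_covBy_mk_iff_right.mpr hu
    exact Set.Finite.of_finite_image him (fun a _ b _ h => congrArg Prod.snd h)
  have finA2 : ∀ z : L₂, {u | z ⋖ u}.Finite := by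
    intro z
    have him : ((fun u => ((x₀, u) : L₁ × L₂)) '' {u | z ⋖ u}).Finite := by
      refine (hdiff (x₀, z)).2.1.subset ?_
      rintro p ⟨u, hu, rfl⟩
      exact Prod.mk_covBy_mk_iff_right.mpr hu
    exact Set.Finite.of_finite_image him (fun a _ b _ h => congrArg Prod.snd h)
  -- the main sum identity
  have hmain : ∀ (x : L₁) (z : L₂),
      ((∑ᶠ y ∈ {y | y ⋖ x}, w₁ y x) + (∑ᶠ u ∈ {u | u ⋖ z}, w₂ u z)) + r =
      (∑ᶠ y ∈ {y | x ⋖ y}, w₁ x y) + (∑ᶠ u ∈ {u | z ⋖ u}, w₂ z u) := by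
    intro x z
    obtain ⟨hfb, hfa, heq⟩ := hdiff (x, z)
    have hLower : {p : L₁ × L₂ | p ⋖ (x, z)} =
        ((fun y => ((y, z) : L₁ × L₂)) '' {y | y ⋖ x}) ∪
        ((fun u => ((x, u) : L₁ × L₂)) '' {u | u ⋖ z}) := by
      ext ⟨a, b⟩
      simp only [Set.mem_setOf_eq, Set.mem_union, Set.mem_image, Prod.mk_covBy_mk_iff,
        Prod.mk.injEq]
      constructor
      · rintro (⟨h, rfl⟩ | ⟨h, rfl⟩)
        · exact Or.inl ⟨a, h, rfl, rfl⟩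
        · exact Or.inr ⟨b, h, rfl, rfl⟩
      · rintro (⟨c, h, rfl, rfl⟩ | ⟨c, h, rfl, rfl⟩)
        · exact Or.inl ⟨h, rfl⟩
        · exact Or.inr ⟨h, rfl⟩
    have hUpper : {p : L₁ × L₂ | (x, z) ⋖ p} =
        ((fun y => ((y, z) : L₁ × L₂)) '' {y | x ⋖ y}) ∪
        ((fun u => ((x, u) : L₁ × L₂)) '' {u | z ⋖ u}) := by
      ext ⟨a, b⟩
      simp only [Set.mem_setOf_eq, Set.mem_union, Set.mem_image, Prod.mk_covBy_mk_iff,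
        Prod.mk.injEq]
      constructor
      · rintro (⟨h, rfl⟩ | ⟨h, rfl⟩)
        · exact Or.inl ⟨a, h, rfl, rfl⟩
        · exact Or.inr ⟨b, h, rfl, rfl⟩
      · rintro (⟨c, h, rfl, rfl⟩ | ⟨c, h, rfl, rfl⟩)
        · exact Or.inl ⟨h, rfl⟩
        · exact Or.inr ⟨h, rfl⟩
    have hdisjB : Disjoint ((fun y => ((y, z) : L₁ × L₂)) '' {y | y ⋖ x})
        ((fun u => ((x, u) : L₁ × L₂)) '' {u | u ⋖ z}) := by
      rw [Set.disjoint_left]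
      rintro p ⟨y, hy, rfl⟩ ⟨u, hu, h⟩
      exact hy.lt.ne' (congrArg Prod.fst h)
    have hdisjA : Disjoint ((fun y => ((y, z) : L₁ × L₂)) '' {y | x ⋖ y})
        ((fun u => ((x, u) : L₁ × L₂)) '' {u | z ⋖ u}) := by
      rw [Set.disjoint_left]
      rintro p ⟨y, hy, rfl⟩ ⟨u, hu, h⟩
      exact hy.lt.ne (congrArg Prod.fst h)
    have hb : (∑ᶠ p ∈ {p : L₁ × L₂ | p ⋖ (x, z)}, w p (x, z)) =
        (∑ᶠ y ∈ {y | y ⋖ x}, w₁ y x) + (∑ᶠ u ∈ {u | u ⋖ z}, w₂ u z) := by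
      rw [hLower, finsum_mem_union hdisjB ((finB1 x).image _) ((finB2 z).image _),
        finsum_mem_image (fun a _ b _ h => congrArg Prod.fst h),
        finsum_mem_image (fun a _ b _ h => congrArg Prod.snd h)]
      congr 1
      · exact finsum_mem_congr rfl (fun y hy => inv1 y x hy z z₀)
      · exact finsum_mem_congr rfl (fun u hu => inv2 u z hu x x₀)
    have ha : (∑ᶠ p ∈ {p : L₁ × L₂ | (x, z) ⋖ p}, w (x, z) p) =
        (∑ᶠ y ∈ {y | x ⋖ y}, w₁ x y) + (∑ᶠ u ∈ {u | z ⋖ u}, w₂ z u) := by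
      rw [hUpper, finsum_mem_union hdisjA ((finA1 x).image _) ((finA2 z).image _),
        finsum_mem_image (fun a _ b _ h => congrArg Prod.fst h),
        finsum_mem_image (fun a _ b _ h => congrArg Prod.snd h)]
      congr 1
      · exact finsum_mem_congr rfl (fun y hy => inv1 x y hy z z₀)
      · exact finsum_mem_congr rfl (fun u hu => inv2 z u hu x x₀)
    rw [hb, ha] at heq
    linarith
  set r₂ : ℤ := (∑ᶠ u ∈ {u | z₀ ⋖ u}, w₂ z₀ u) - (∑ᶠ u ∈ {u | u ⋖ z₀}, w₂ u z₀) with hr₂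
  set r₁ : ℤ := r - r₂ with hr₁
  refine ⟨w₁, w₂, r₁, r₂, ?_, ?_, by ring, ?_, ?_⟩
  · intro x
    refine ⟨finB1 x, finA1 x, ?_⟩
    have h := hmain x z₀
    rw [hr₁, hr₂]
    linarith
  · intro z
    refine ⟨finB2 z, finA2 z, ?_⟩
    have h1 := hmain x₀ z
    have h2 := hmain x₀ z₀
    rw [hr₂]
    linarith
  · intro x y hxy z
    exact inv1 x y hxy z z₀
  · intro v x y hxy
    exact inv2 x y hxy v x₀
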